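/- For every positive integer n, all complex numbers x, z with x ≠ 0 and z ≠ 0, and every complex number y, one has Z_ASM(n,x,y,z) = x^{n(n−1)/2} z^{n−1} Z_ASM(n, 1/x, y/x, 1/z). -/

import Mathlib

open Finset Matrix

/-- An n×n alternating sign matrix: entries in {-1,0,1}, row and column sums 1,
and nonzero entries alternate in sign along each row and each column. -/
def IsASM (n : ℕ) (A : Matrix (Fin n) (Fin n) ℤ) : Prop :=
  (∀ i j, A i j = -1 ∨ A i j = 0 ∨ A i j = 1) ∧
  (∀ i, ∑ j, A i j = 1) ∧
  (∀ j, ∑ i, A i j = 1) ∧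
  (∀ (i j₁ j₂ : Fin n), j₁ < j₂ → A i j₁ ≠ 0 → A i j₂ ≠ 0 →
    (∀ j, j₁ < j → j < j₂ → A i j = 0) → A i j₂ = -A i j₁) ∧
  (∀ (j i₁ i₂ : Fin n), i₁ < i₂ → A i₁ j ≠ 0 → A i₂ j ≠ 0 →
    (∀ i, i₁ < i → i < i₂ → A i j = 0) → A i₂ j = -A i₁ j)

/-- ν(A) = ∑_{1≤i<i'≤n, 1≤j'≤j≤n} A_{i j} A_{i' j'}. -/
def nuASM {n : ℕ} (A : Matrix (Fin n) (Fin n) ℤ) : ℤ :=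
  ∑ i : Fin n, ∑ i' : Fin n, ∑ j : Fin n, ∑ j' : Fin n,
    if i < i' ∧ j' ≤ j then A i j * A i' j' else 0

/-- μ(A) = number of entries of A equal to -1. -/
def muASM {n : ℕ} (A : Matrix (Fin n) (Fin n) ℤ) : ℕ :=
  (Finset.univ.filter fun p : Fin n × Fin n => A p.1 p.2 = -1).card

/-- ρ(A) = number of 0's to the left of the (unique) 1 in the first row of A. -/
def rhoASM {n : ℕ} (A : Matrix (Fin n) (Fin n) ℤ) : ℕ :=
  haveI : ∀ (i j : Fin n), Decidable (∃ j' : Fin n, j < j' ∧ A i j' = 1) := fun _ _ => inferInstance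
  (Finset.univ.filter fun j : Fin n =>
    ∃ i : Fin n, (i : ℕ) = 0 ∧ A i j = 0 ∧ ∃ j' : Fin n, j < j' ∧ A i j' = 1).card

/-- Z_ASM(n,x,y,z) = ∑_{A ∈ ASM(n)} x^{ν(A)} y^{μ(A)} z^{ρ(A)}. -/
noncomputable def ZASM (n : ℕ) (x y z : ℂ) : ℂ :=
  ∑ᶠ A ∈ {A : Matrix (Fin n) (Fin n) ℤ | IsASM n A},
    x ^ nuASM A * y ^ muASM A * z ^ rhoASM A

/-! ### Auxiliary development -/

def revCols {n : ℕ} (A : Matrix (Fin n) (Fin n) ℤ) : Matrix (Fin n) (Fin n) ℤ :=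
  fun i j => A i j.rev

lemma revCols_revCols {n : ℕ} (A : Matrix (Fin n) (Fin n) ℤ) : revCols (revCols A) = A := by
  funext i j; simp [revCols]

lemma isASM_revCols {n : ℕ} {A : Matrix (Fin n) (Fin n) ℤ} (hA : IsASM n A) :
    IsASM n (revCols A) := by
  obtain ⟨hval, hrow, hcol, hralt, hcalt⟩ := hA
  refine ⟨fun i j => hval i j.rev, ?_, fun j => hcol j.rev, ?_, ?_⟩
  · intro i
    have : ∑ j : Fin n, A i (Fin.revPerm j) = ∑ j, A i j := Equiv.sum_comp Fin.revPerm _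
    simpa [revCols] using this.trans (hrow i)
  · intro i j₁ j₂ h12 h1 h2 hz
    have key := hralt i j₂.rev j₁.rev (Fin.rev_lt_rev.mpr h12) h2 h1 ?_
    · simp only [revCols]; rw [key]; ring
    · intro j hj1 hj2
      have := hz j.rev (by simpa [Fin.lt_rev_iff] using hj2) (by simpa [Fin.rev_lt_iff] using hj1)
      simpa [revCols] using this
  · intro j i₁ i₂ h12 h1 h2 hz
    exact hcalt j.rev i₁ i₂ h12 h1 h2 hz

lemma mu_revCols {n : ℕ} (A : Matrix (Fin n) (Fin n) ℤ) : muASM (revCols A) = muASM A := by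
  unfold muASM
  apply Finset.card_nbij' (i := fun p => (p.1, p.2.rev)) (j := fun p => (p.1, p.2.rev))
  · intro p hp; simp only [Finset.coe_filter, Set.mem_setOf_eq, Finset.mem_coe, Finset.mem_filter, Finset.mem_univ, true_and] at hp ⊢; simpa [revCols] using hp
  · intro p hp; simp only [Finset.coe_filter, Set.mem_setOf_eq, Finset.mem_coe, Finset.mem_filter, Finset.mem_univ, true_and] at hp ⊢; simpa [revCols] using hp
  · intro p hp; simp
  · intro p hp; simp

/-- In a sequence with values in {-1,0,1}, alternating nonzero signs, and total
sum 1, the first entry cannot be -1. -/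
lemma first_not_neg (n : ℕ) (f : ℕ → ℤ)
    (halt : ∀ i₁ i₂, i₁ < i₂ → i₂ < n → f i₁ ≠ 0 → f i₂ ≠ 0 →
      (∀ i, i₁ < i → i < i₂ → f i = 0) → f i₂ = -f i₁)
    (hsum : ∑ i ∈ Finset.range n, f i = 1)
    (h0 : 0 < n) (hneg : f 0 = -1) : False := by
  have key : ∀ m, 1 ≤ m → m ≤ n → ∃ l, l < m ∧ f l ≠ 0 ∧ (∀ i, l < i → i < m → f i = 0) ∧
      ((f l = -1 ∧ ∑ i ∈ Finset.range m, f i = -1) ∨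
       (f l = 1 ∧ ∑ i ∈ Finset.range m, f i = 0)) := by
    intro m hm
    induction m, hm using Nat.le_induction with
    | base =>
      intro _
      exact ⟨0, by omega, by rw [hneg]; norm_num, fun i h1 h2 => by omega,
        Or.inl ⟨hneg, by rw [Finset.sum_range_one, hneg]⟩⟩
    | succ m hm ih =>
      intro hmn
      obtain ⟨l, hl, hl0, hzero, hbr⟩ := ih (by omega)
      by_cases hfm : f m = 0
      · refine ⟨l, by omega, hl0, ?_, ?_⟩
        · intro i h1 h2
          rcases Nat.lt_or_ge i m with h | h
          · exact hzero i h1 h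
          · have : i = m := by omega
            rw [this]; exact hfm
        · rcases hbr with ⟨h1, h2⟩ | ⟨h1, h2⟩
          · exact Or.inl ⟨h1, by rw [Finset.sum_range_succ, h2, hfm]; ring⟩
          · exact Or.inr ⟨h1, by rw [Finset.sum_range_succ, h2, hfm]; ring⟩
      · have halt' := halt l m hl (by omega) hl0 hfm hzero
        refine ⟨m, by omega, hfm, fun i h1 h2 => by omega, ?_⟩
        rcases hbr with ⟨h1, h2⟩ | ⟨h1, h2⟩
        · exact Or.inr ⟨by rw [halt', h1]; try norm_num, by
            rw [Finset.sum_range_succ, h2, halt', h1]; try norm_num⟩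
        · exact Or.inl ⟨by rw [halt', h1]; try norm_num, by
            rw [Finset.sum_range_succ, h2, halt', h1]; try norm_num⟩
  obtain ⟨l, -, -, -, hbr⟩ := key n h0 le_rfl
  rcases hbr with ⟨-, h⟩ | ⟨-, h⟩ <;> rw [hsum] at h <;> exact absurd h (by norm_num)

/-- In row 0 of an ASM there is no -1. -/
lemma row0_nonneg {n : ℕ} {A : Matrix (Fin n) (Fin n) ℤ} (hA : IsASM n A) (hn : 0 < n)
    (j : Fin n) : A ⟨0, hn⟩ j = 0 ∨ A ⟨0, hn⟩ j = 1 := by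
  obtain ⟨hval, hrow, hcol, hralt, hcalt⟩ := hA
  rcases hval ⟨0, hn⟩ j with h | h | h
  · exfalso
    let f : ℕ → ℤ := fun i => if hi : i < n then A ⟨i, hi⟩ j else 0
    have e : ∀ i (hi : i < n), f i = A ⟨i, hi⟩ j := fun i hi => dif_pos hi
    refine first_not_neg n f ?_ ?_ hn ?_
    · intro i₁ i₂ h12 h2n h1ne h2ne hz
      have h1n : i₁ < n := lt_trans h12 h2n
      rw [e i₁ h1n] at h1ne
      rw [e i₂ h2n] at h2ne
      rw [e i₂ h2n, e i₁ h1n]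
      apply hcalt j ⟨i₁, h1n⟩ ⟨i₂, h2n⟩ h12 h1ne h2ne
      intro i hi1 hi2
      have := hz i.1 hi1 hi2
      rw [e i.1 i.2, Fin.eta] at this
      exact this
    · have h2 : ∑ i : Fin n, f i.1 = ∑ i : Fin n, A i j :=
        Finset.sum_congr rfl fun i _ => by rw [e i.1 i.2, Fin.eta]
      rw [← Fin.sum_univ_eq_sum_range f n, h2]
      exact hcol j
    · exact (e 0 hn).trans h
  · exact Or.inl h
  · exact Or.inr h

/-- Row 0 of an ASM has a unique 1 and zeros elsewhere. -/
lemma row0_structure {n : ℕ} {A : Matrix (Fin n) (Fin n) ℤ} (hA : IsASM n A) (hn : 0 < n) :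
    ∃ j₀ : Fin n, A ⟨0, hn⟩ j₀ = 1 ∧ ∀ j, j ≠ j₀ → A ⟨0, hn⟩ j = 0 := by
  classical
  have hval := fun j => row0_nonneg hA hn j
  have hsum : ∑ j, A ⟨0, hn⟩ j = 1 := hA.2.1 ⟨0, hn⟩
  have hsum' : ((univ.filter fun j => A ⟨0, hn⟩ j = 1).card : ℤ) = 1 := by
    calc ((univ.filter fun j => A ⟨0, hn⟩ j = 1).card : ℤ)
        = ∑ j, (if A ⟨0, hn⟩ j = 1 then (1 : ℤ) else 0) := by
          rw [Finset.card_filter]; push_cast; rfl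
      _ = ∑ j, A ⟨0, hn⟩ j :=
          Finset.sum_congr rfl fun j _ => by rcases hval j with h | h <;> simp [h]
      _ = 1 := hsum
  have hcard : (univ.filter fun j => A ⟨0, hn⟩ j = 1).card = 1 := by exact_mod_cast hsum'
  obtain ⟨j₀, hj₀⟩ := Finset.card_eq_one.mp hcard
  refine ⟨j₀, ?_, ?_⟩
  · have : j₀ ∈ univ.filter fun j => A ⟨0, hn⟩ j = 1 := by rw [hj₀]; exact Finset.mem_singleton_self _
    exact (Finset.mem_filter.mp this).2
  · intro j hj
    rcases hval j with h | h
    · exact h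
    · exfalso
      have : j ∈ univ.filter fun j => A ⟨0, hn⟩ j = 1 := Finset.mem_filter.mpr ⟨Finset.mem_univ _, h⟩
      rw [hj₀, Finset.mem_singleton] at this
      exact hj this

lemma rho_eq {n : ℕ} {A : Matrix (Fin n) (Fin n) ℤ} (hn : 0 < n) (j₀ : Fin n)
    (h1 : A ⟨0, hn⟩ j₀ = 1) (h0 : ∀ j, j ≠ j₀ → A ⟨0, hn⟩ j = 0) :
    rhoASM A = (j₀ : ℕ) := by
  classical
  unfold rhoASM
  have : (univ.filter fun j : Fin n =>
      ∃ i : Fin n, (i : ℕ) = 0 ∧ A i j = 0 ∧ ∃ j' : Fin n, j < j' ∧ A i j' = 1) =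
      Finset.Iio j₀ := by
    ext j
    simp only [Finset.mem_filter, Finset.mem_univ, true_and, Finset.mem_Iio]
    constructor
    · rintro ⟨i, hi0, hz, j', hjj', hj'1⟩
      have hi : i = ⟨0, hn⟩ := Fin.ext hi0
      subst hi
      by_cases hj' : j' = j₀
      · exact hj' ▸ hjj'
      · exact absurd hj'1 (by rw [h0 j' hj']; norm_num)
    · intro hj
      have hne : j ≠ j₀ := Fin.ne_of_lt hj
      exact ⟨⟨0, hn⟩, rfl, h0 j hne, j₀, hj, h1⟩
  have h2 := congrArg Finset.card this
  rw [Fin.card_Iio] at h2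
  convert h2

lemma rho_add_rho {n : ℕ} {A : Matrix (Fin n) (Fin n) ℤ} (hA : IsASM n A) (hn : 0 < n) :
    rhoASM A ≤ n - 1 ∧ rhoASM (revCols A) = (n - 1) - rhoASM A := by
  obtain ⟨j₀, h1, h0⟩ := row0_structure hA hn
  have e1 : rhoASM A = (j₀ : ℕ) := rho_eq hn j₀ h1 h0
  have e2 : rhoASM (revCols A) = (j₀.rev : ℕ) := by
    apply rho_eq hn j₀.rev
    · show A ⟨0, hn⟩ j₀.rev.rev = 1
      rwa [Fin.rev_rev]
    · intro j hj
      show A ⟨0, hn⟩ j.rev = 0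
      apply h0
      intro hc
      exact hj (by rw [← hc, Fin.rev_rev])
  have hlt : (j₀ : ℕ) < n := j₀.isLt
  have hrev : (j₀.rev : ℕ) = n - 1 - (j₀ : ℕ) := by rw [Fin.val_rev]; omega
  constructor
  · rw [e1]; omega
  · rw [e1, e2, hrev]

lemma mu_cast {n : ℕ} (A : Matrix (Fin n) (Fin n) ℤ) :
    (muASM A : ℤ) = ∑ i : Fin n, ∑ j : Fin n, (if A i j = -1 then (1 : ℤ) else 0) := by
  classical
  unfold muASM
  rw [Finset.card_filter]
  push_cast
  rw [Fintype.sum_prod_type]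

lemma sum_entries {n : ℕ} {A : Matrix (Fin n) (Fin n) ℤ} (hA : IsASM n A) :
    ∑ i : Fin n, ∑ j : Fin n, A i j = n := by
  rw [Finset.sum_congr rfl fun i (_ : i ∈ univ) => hA.2.1 i]
  simp

lemma sum_sq_entries {n : ℕ} {A : Matrix (Fin n) (Fin n) ℤ} (hA : IsASM n A) :
    ∑ i : Fin n, ∑ j : Fin n, A i j * A i j = n + 2 * muASM A := by
  classical
  have key : ∀ i j, A i j * A i j = A i j + 2 * (if A i j = -1 then (1 : ℤ) else 0) := by
    intro i j
    rcases hA.1 i j with h | h | h <;> rw [h] <;> norm_num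
  calc ∑ i : Fin n, ∑ j : Fin n, A i j * A i j
      = ∑ i : Fin n, ∑ j : Fin n, (A i j + 2 * (if A i j = -1 then (1 : ℤ) else 0)) := by
        exact Finset.sum_congr rfl fun i _ => Finset.sum_congr rfl fun j _ => key i j
    _ = (∑ i : Fin n, ∑ j : Fin n, A i j)
        + 2 * ∑ i : Fin n, ∑ j : Fin n, (if A i j = -1 then (1 : ℤ) else 0) := by
        rw [Finset.mul_sum]
        rw [← Finset.sum_add_distrib]
        exact Finset.sum_congr rfl fun i _ => by
          rw [Finset.mul_sum, ← Finset.sum_add_distrib]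
    _ = n + 2 * muASM A := by rw [sum_entries hA, ← mu_cast]

lemma sum3_comm {n : ℕ} (F : Fin n → Fin n → Fin n → ℤ) :
    ∑ i : Fin n, ∑ i' : Fin n, ∑ j : Fin n, F i i' j
      = ∑ j : Fin n, ∑ i : Fin n, ∑ i' : Fin n, F i i' j := by
  calc ∑ i : Fin n, ∑ i' : Fin n, ∑ j : Fin n, F i i' j
      = ∑ i : Fin n, ∑ j : Fin n, ∑ i' : Fin n, F i i' j :=
        Finset.sum_congr rfl fun i _ => Finset.sum_comm
    _ = ∑ j : Fin n, ∑ i : Fin n, ∑ i' : Fin n, F i i' j := Finset.sum_comm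

lemma nu_rev {n : ℕ} {A : Matrix (Fin n) (Fin n) ℤ} (hA : IsASM n A) :
    nuASM A + nuASM (revCols A) + muASM A = ((n * (n - 1) / 2 : ℕ) : ℤ) := by
  classical
  -- Step 1: rewrite nuASM (revCols A)
  have hrev : nuASM (revCols A) = ∑ i : Fin n, ∑ i' : Fin n, ∑ j : Fin n, ∑ j' : Fin n,
      (if i < i' ∧ j ≤ j' then A i j * A i' j' else 0) := by
    unfold nuASM revCols
    refine Finset.sum_congr rfl fun i _ => Finset.sum_congr rfl fun i' _ => ?_
    rw [← Equiv.sum_comp Fin.revPerm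
      (fun j => ∑ j' : Fin n, if i < i' ∧ j ≤ j' then A i j * A i' j' else 0)]
    refine Finset.sum_congr rfl fun j _ => ?_
    rw [← Equiv.sum_comp Fin.revPerm
      (fun j' => if i < i' ∧ Fin.revPerm j ≤ j' then A i (Fin.revPerm j) * A i' j' else 0)]
    refine Finset.sum_congr rfl fun j' _ => ?_
    simp [Fin.rev_le_rev]
  -- Step 2: combine the two nu's
  have comb : nuASM A + nuASM (revCols A) =
      (∑ i : Fin n, ∑ i' : Fin n, ∑ j : Fin n, ∑ j' : Fin n,
        (if i < i' then A i j * A i' j' else 0)) +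
      (∑ i : Fin n, ∑ i' : Fin n, ∑ j : Fin n, ∑ j' : Fin n,
        (if i < i' ∧ j' = j then A i j * A i' j' else 0)) := by
    rw [hrev]
    unfold nuASM
    rw [← Finset.sum_add_distrib, ← Finset.sum_add_distrib]
    refine Finset.sum_congr rfl fun i _ => ?_
    rw [← Finset.sum_add_distrib, ← Finset.sum_add_distrib]
    refine Finset.sum_congr rfl fun i' _ => ?_
    rw [← Finset.sum_add_distrib, ← Finset.sum_add_distrib]
    refine Finset.sum_congr rfl fun j _ => ?_
    rw [← Finset.sum_add_distrib, ← Finset.sum_add_distrib]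
    refine Finset.sum_congr rfl fun j' _ => ?_
    by_cases hP : i < i'
    · rcases eq_or_ne j' j with rfl | hne
      · simp [hP]
      · rcases le_total j' j with h | h
        · have h2 : ¬j ≤ j' := fun hc => hne (le_antisymm h hc)
          simp [hP, h, h2, hne]
        · have h2 : ¬j' ≤ j := fun hc => hne (le_antisymm hc h)
          simp [hP, h, h2, hne]
    · simp [hP]
  -- Step 3: first piece equals N
  have hS1 : ∑ i : Fin n, ∑ i' : Fin n, ∑ j : Fin n, ∑ j' : Fin n,
      (if i < i' then A i j * A i' j' else 0) = ((n * (n - 1) / 2 : ℕ) : ℤ) := by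
    have inner : ∀ i i' : Fin n, (∑ j : Fin n, ∑ j' : Fin n,
        if i < i' then A i j * A i' j' else 0) = if i < i' then (1 : ℤ) else 0 := by
      intro i i'
      by_cases h : i < i'
      · simp only [if_pos h]
        rw [← Finset.sum_mul_sum, hA.2.1 i, hA.2.1 i', one_mul]
      · simp [h]
    rw [Finset.sum_congr rfl fun i _ => Finset.sum_congr rfl fun i' _ => inner i i']
    rw [Finset.sum_comm]
    have cnt : ∀ i' : Fin n, (∑ i : Fin n, if i < i' then (1 : ℤ) else 0) = ((i' : ℕ) : ℤ) := by
      intro i'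
      rw [Finset.sum_boole]
      congr 1
      rw [show univ.filter (· < i') = Finset.Iio i' by ext x; simp]
      simp
    rw [Finset.sum_congr rfl fun i' _ => cnt i']
    rw [← Nat.cast_sum]
    congr 1
    rw [Fin.sum_univ_eq_sum_range (fun i => i) n]
    exact Finset.sum_range_id n
  -- Step 4: second piece equals -muASM A
  have hS2 : ∑ i : Fin n, ∑ i' : Fin n, ∑ j : Fin n, ∑ j' : Fin n,
      (if i < i' ∧ j' = j then A i j * A i' j' else 0) = -(muASM A : ℤ) := by
    have collapse : ∀ i i' j : Fin n, (∑ j' : Fin n,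
        if i < i' ∧ j' = j then A i j * A i' j' else 0) =
        if i < i' then A i j * A i' j else 0 := by
      intro i i' j
      by_cases h : i < i' <;> simp [h, ite_and, Finset.sum_ite_eq']
    rw [Finset.sum_congr rfl fun i _ => Finset.sum_congr rfl fun i' _ =>
      Finset.sum_congr rfl fun j _ => collapse i i' j]
    set T := ∑ i : Fin n, ∑ i' : Fin n, ∑ j : Fin n,
      (if i < i' then A i j * A i' j else 0) with hT
    have expand : (n : ℤ) = ∑ j : Fin n, ∑ i : Fin n, ∑ i' : Fin n, A i j * A i' j := by
      calc (n : ℤ) = ∑ _j : Fin n, (1 : ℤ) * 1 := by simp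
        _ = ∑ j : Fin n, (∑ i : Fin n, A i j) * (∑ i' : Fin n, A i' j) :=
            Finset.sum_congr rfl fun j _ => by rw [hA.2.2.1 j]
        _ = ∑ j : Fin n, ∑ i : Fin n, ∑ i' : Fin n, A i j * A i' j :=
            Finset.sum_congr rfl fun j _ => Finset.sum_mul_sum _ _ _ _
    have trich : ∀ (i i' : Fin n) (c : ℤ), c =
        ((if i < i' then c else 0) + (if i' < i then c else 0)) + (if i = i' then c else 0) := by
      intro i i' c
      rcases lt_trichotomy i i' with h | h | h
      · simp [h, asymm h, ne_of_lt h]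
      · simp [h, lt_irrefl]
      · simp [h, asymm h, (ne_of_gt h : i ≠ i')]
    have split : ∑ j : Fin n, ∑ i : Fin n, ∑ i' : Fin n, A i j * A i' j =
        (∑ j : Fin n, ∑ i : Fin n, ∑ i' : Fin n, (if i < i' then A i j * A i' j else 0)) +
        (∑ j : Fin n, ∑ i : Fin n, ∑ i' : Fin n, (if i' < i then A i j * A i' j else 0)) +
        (∑ j : Fin n, ∑ i : Fin n, ∑ i' : Fin n, (if i = i' then A i j * A i' j else 0)) := by
      rw [← Finset.sum_add_distrib, ← Finset.sum_add_distrib]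
      refine Finset.sum_congr rfl fun j _ => ?_
      rw [← Finset.sum_add_distrib, ← Finset.sum_add_distrib]
      refine Finset.sum_congr rfl fun i _ => ?_
      rw [← Finset.sum_add_distrib, ← Finset.sum_add_distrib]
      exact Finset.sum_congr rfl fun i' _ => trich i i' _
    have e1 : ∑ j : Fin n, ∑ i : Fin n, ∑ i' : Fin n,
        (if i < i' then A i j * A i' j else 0) = T := by
      rw [hT, sum3_comm (fun i i' j => if i < i' then A i j * A i' j else 0)]
    have e2 : ∑ j : Fin n, ∑ i : Fin n, ∑ i' : Fin n,
        (if i' < i then A i j * A i' j else 0) = T := by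
      rw [hT, sum3_comm (fun i i' j => if i < i' then A i j * A i' j else 0)]
      refine Finset.sum_congr rfl fun j _ => ?_
      rw [Finset.sum_comm]
      exact Finset.sum_congr rfl fun i _ => Finset.sum_congr rfl fun i' _ => by
        rw [mul_comm]
    have e3 : ∑ j : Fin n, ∑ i : Fin n, ∑ i' : Fin n,
        (if i = i' then A i j * A i' j else 0) = (n : ℤ) + 2 * muASM A := by
      rw [← sum_sq_entries hA, Finset.sum_comm]
      refine Finset.sum_congr rfl fun i _ => Finset.sum_congr rfl fun j _ => ?_
      simp [Finset.sum_ite_eq]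
    rw [split, e1, e2, e3] at expand
    linarith
  rw [comb, hS1, hS2]
  ring

lemma finite_ASM (n : ℕ) : {A : Matrix (Fin n) (Fin n) ℤ | IsASM n A}.Finite := by
  have hpi : (Set.pi Set.univ (fun _ : Fin n =>
      Set.pi Set.univ (fun _ : Fin n => ({-1, 0, 1} : Set ℤ)))).Finite :=
    Set.Finite.pi fun _ => Set.Finite.pi fun _ => Set.toFinite _
  apply hpi.subset
  intro A hA
  intro i _
  intro j _
  rcases hA.1 i j with h | h | h <;> simp [h]


/-- Z_ASM(n,x,y,z) = x^{n(n−1)/2} z^{n−1} Z_ASM(n,1/x,y/x,1/z) for x, z ≠ 0. -/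
theorem ZASM_symmetry (n : ℕ) (hn : 0 < n) (x y z : ℂ) (hx : x ≠ 0) (hz : z ≠ 0) :
    ZASM n x y z =
      x ^ (n * (n - 1) / 2) * z ^ (n - 1) * ZASM n (1 / x) (y / x) (1 / z) := by
  classical
  have hS := finite_ASM n
  unfold ZASM
  rw [← hS.coe_toFinset, finsum_mem_coe_finset, finsum_mem_coe_finset, Finset.mul_sum]
  refine Finset.sum_nbij' (i := revCols) (j := revCols) ?_ ?_ ?_ ?_ ?_
  · intro A hA
    rw [Set.Finite.mem_toFinset] at *
    exact isASM_revCols hA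
  · intro A hA
    rw [Set.Finite.mem_toFinset] at *
    exact isASM_revCols hA
  · intro A _; exact revCols_revCols A
  · intro A _; exact revCols_revCols A
  · intro A hA
    rw [Set.Finite.mem_toFinset] at hA
    -- facts
    have hnu := nu_rev hA
    have hmu := mu_revCols A
    obtain ⟨hrle, hrho⟩ := rho_add_rho hA hn
    set N : ℕ := n * (n - 1) / 2 with hN
    set a : ℤ := nuASM A with ha
    set b : ℕ := muASM A with hb
    set c : ℕ := rhoASM A with hc
    have hnu' : nuASM (revCols A) = (N : ℤ) - a - b := by linarith [hnu]
    rw [one_div, one_div, div_pow, inv_pow]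
    have e1 : (x⁻¹ : ℂ) ^ ((N : ℤ) - a - b) = x ^ (a + (b : ℤ) - N) := by
      rw [_root_.inv_zpow', show -((N : ℤ) - a - b) = a + (b : ℤ) - N by ring]
    have e2 : x ^ (N : ℕ) * x ^ (a + (b : ℤ) - N) = x ^ a * x ^ (b : ℕ) := by
      rw [← zpow_natCast x N, ← zpow_natCast x b, ← zpow_add₀ hx, ← zpow_add₀ hx]
      congr 1
      ring
    have e3 : z ^ (n - 1) = z ^ c * z ^ (n - 1 - c) := by
      rw [← pow_add]
      congr 1
      omega
    rw [hnu', hmu, hrho, e1]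
    calc x ^ a * y ^ b * z ^ c
        = (x ^ a * x ^ (b : ℕ)) * (y ^ b / x ^ b) * (z ^ c *
            (z ^ (n - 1 - c) * (z ^ (n - 1 - c))⁻¹)) := by
          rw [mul_inv_cancel₀ (pow_ne_zero _ hz), mul_one, mul_comm (x ^ a) (x ^ (b : ℕ))]
          rw [mul_assoc (x ^ (b:ℕ)) (x ^ a)]
          rw [show x ^ a * (y ^ b / x ^ b) = x ^ a * y ^ b / x ^ b by ring]
          rw [mul_div_assoc']
          rw [show x ^ (b:ℕ) * (x ^ a * y ^ b) / x ^ b = (x ^ a * y ^ b) * (x ^ b / x ^ b) by ring]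
          rw [div_self (pow_ne_zero _ hx), mul_one]
      _ = x ^ (N : ℕ) * z ^ (n - 1) * (x ^ (a + (b : ℤ) - N) * (y ^ b / x ^ b) *
            (z ^ (n - 1 - c))⁻¹) := by
          rw [← e2, e3]
          ring
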